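/- Let 𝒟 be a nontrivial symmetric (v,k,λ) design, let G be a flag-transitive group of automorphisms of 𝒟, and let α be a point of 𝒟. Then k divides λ·d for every nontrivial subdegree d of G, i.e., for the cardinality d of every orbit of the stabilizer G_α on 𝒫 other than {α}. -/

import Mathlib

/-- A symmetric `(v, k, λ)` design: a finite set of `v` points together with a family of
`v` blocks, each block a `k`-element subset of the points, such that every point lies in
exactly `k` blocks and any two distinct points lie in exactly `λ` common blocks. -/
structure SymmetricDesign (P : Type) [Fintype P] [DecidableEq P] (v k lam : ℕ) where
  blocks : Finset (Finset P)
  card_points : Fintype.card P = v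
  card_blocks : blocks.card = v
  block_size : ∀ b ∈ blocks, b.card = k
  point_count : ∀ p : P, (blocks.filter fun b => p ∈ b).card = k
  pair_count : ∀ p q : P, p ≠ q →
    (blocks.filter fun b => p ∈ b ∧ q ∈ b).card = lam

/-- `G` is a group of automorphisms of the design `D`: every element of `G` maps blocks
to blocks. -/
def IsAutGroup {P : Type} [Fintype P] [DecidableEq P] {v k lam : ℕ}
    (D : SymmetricDesign P v k lam) (G : Subgroup (Equiv.Perm P)) : Prop :=
  ∀ g ∈ G, ∀ b ∈ D.blocks, b.image (g : P → P) ∈ D.blocks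

/-- `G` is flag-transitive on `D`: it acts transitively on incident point-block pairs. -/
def FlagTransitive {P : Type} [Fintype P] [DecidableEq P] {v k lam : ℕ}
    (D : SymmetricDesign P v k lam) (G : Subgroup (Equiv.Perm P)) : Prop :=
  ∀ p₁ p₂ : P, ∀ b₁ b₂ : Finset P, b₁ ∈ D.blocks → b₂ ∈ D.blocks →
    p₁ ∈ b₁ → p₂ ∈ b₂ → ∃ g ∈ G, g p₁ = p₂ ∧ b₁.image (g : P → P) = b₂

/-- Lemma 2.1(c): for a nontrivial flag-transitive symmetric `(v,k,λ)` design,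
`k` divides `λ·d` for every nontrivial subdegree `d` of `G`, i.e. for the cardinality of
every orbit of the point stabiliser `G_α` on the point set other than `{α}`. -/
theorem symmetricDesign_flagTransitive_subdegree
    {P : Type} [Fintype P] [DecidableEq P] {v k lam : ℕ}
    (D : SymmetricDesign P v k lam) (hnt : 2 < k ∧ k < v - 1)
    (G : Subgroup (Equiv.Perm P)) (hAut : IsAutGroup D G)
    (hFlag : FlagTransitive D G) (α : P) :
    ∀ p : P, MulAction.orbit (MulAction.stabilizer G α) p ≠ ({α} : Set P) →
      k ∣ lam * Nat.card (MulAction.orbit (MulAction.stabilizer G α) p) := by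
  classical
  intro p hne
  set S := MulAction.orbit (MulAction.stabilizer G α) p with hSdef
  -- α ∉ S
  have horbα : MulAction.orbit (MulAction.stabilizer G α) α = ({α} : Set P) := by
    ext x
    constructor
    · rintro ⟨g, rfl⟩
      have := g.2
      simp only [MulAction.mem_stabilizer_iff] at this
      exact this
    · rintro rfl
      exact ⟨1, by simp⟩
  have hαS : α ∉ S := by
    intro h
    apply hne
    have : S = MulAction.orbit (MulAction.stabilizer G α) α :=
      (MulAction.orbit_eq_iff.mpr h).symm
    rw [this, horbα]
  have hSfin : S.Finite := Set.toFinite S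
  set Δ : Finset P := hSfin.toFinset with hΔdef
  have hmemΔ : ∀ x, x ∈ Δ ↔ x ∈ S := fun x => hSfin.mem_toFinset
  -- Δ is invariant under elements of G fixing α
  have hΔinv : ∀ g : Equiv.Perm P, ∀ hg : g ∈ G, g α = α → Δ.image (g : P → P) = Δ := by
    intro g hg hfix
    have hgs : (⟨g, hg⟩ : G) ∈ MulAction.stabilizer G α := by
      rw [MulAction.mem_stabilizer_iff]
      exact hfix
    have hginv : g⁻¹ ∈ G := inv_mem hg
    have hgsinv : (⟨g⁻¹, hginv⟩ : G) ∈ MulAction.stabilizer G α := by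
      rw [MulAction.mem_stabilizer_iff]
      show g⁻¹ α = α
      exact g.injective (by simp [hfix])
    have hstep : ∀ x ∈ S, g x ∈ S := by
      rintro x ⟨h, rfl⟩
      refine ⟨(⟨⟨g, hg⟩, hgs⟩ : MulAction.stabilizer G α) * h, ?_⟩
      simp only [mul_smul]; rfl
    have hstep' : ∀ x ∈ S, g⁻¹ x ∈ S := by
      rintro x ⟨h, rfl⟩
      refine ⟨(⟨⟨g⁻¹, hginv⟩, hgsinv⟩ : MulAction.stabilizer G α) * h, ?_⟩
      simp only [mul_smul]; rfl
    apply Finset.coe_injective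
    rw [Finset.coe_image]
    simp only [hΔdef, Set.Finite.coe_toFinset]
    apply Set.Subset.antisymm
    · rintro x ⟨y, hy, rfl⟩
      exact hstep y hy
    · intro x hx
      exact ⟨g⁻¹ x, hstep' x hx, by simp⟩
  -- blocks through α
  set T : Finset (Finset P) := D.blocks.filter (fun b => α ∈ b) with hTdef
  have hTcard : T.card = k := D.point_count α
  have hTne : T.Nonempty := by
    rw [← Finset.card_pos, hTcard]; omega
  obtain ⟨B₀, hB₀⟩ := hTne
  have hB₀b : B₀ ∈ D.blocks := (Finset.mem_filter.mp hB₀).1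
  have hαB₀ : α ∈ B₀ := (Finset.mem_filter.mp hB₀).2
  -- constant intersection size
  have hconst : ∀ B ∈ T, (B ∩ Δ).card = (B₀ ∩ Δ).card := by
    intro B hB
    have hBb : B ∈ D.blocks := (Finset.mem_filter.mp hB).1
    have hαB : α ∈ B := (Finset.mem_filter.mp hB).2
    obtain ⟨g, hgG, hfix, himg⟩ := hFlag α α B₀ B hB₀b hBb hαB₀ hαB
    have hinj : Function.Injective (g : P → P) := g.injective
    have h1 : (B₀ ∩ Δ).image (g : P → P) = B ∩ Δ := by
      rw [Finset.image_inter _ _ hinj, himg, hΔinv g hgG hfix]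
    calc (B ∩ Δ).card = ((B₀ ∩ Δ).image (g : P → P)).card := by rw [h1]
      _ = (B₀ ∩ Δ).card := Finset.card_image_of_injective _ hinj
  -- double counting
  have hcount : lam * Δ.card = (B₀ ∩ Δ).card * k := by
    have h1 : ∑ β ∈ Δ, (T.filter (fun b => β ∈ b)).card = ∑ B ∈ T, (B ∩ Δ).card := by
      simp_rw [Finset.card_filter]
      rw [Finset.sum_comm]
      apply Finset.sum_congr rfl
      intro B _
      rw [← Finset.card_filter, Finset.filter_mem_eq_inter, Finset.inter_comm]
    have h2 : ∀ β ∈ Δ, (T.filter (fun b => β ∈ b)).card = lam := by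
      intro β hβ
      have hβS : β ∈ S := (hmemΔ β).mp hβ
      have hβα : α ≠ β := by rintro rfl; exact hαS hβS
      have := D.pair_count α β hβα
      rw [← this, hTdef, Finset.filter_filter]
    have h3 : ∑ β ∈ Δ, (T.filter (fun b => β ∈ b)).card = lam * Δ.card := by
      rw [Finset.sum_congr rfl h2, Finset.sum_const, smul_eq_mul, mul_comm]
    have h4 : ∑ B ∈ T, (B ∩ Δ).card = (B₀ ∩ Δ).card * k := by
      rw [Finset.sum_congr rfl hconst, Finset.sum_const, smul_eq_mul, hTcard, mul_comm]
    rw [← h3, h1, h4]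
  have hNat : Nat.card S = Δ.card := by
    rw [Nat.card_eq_card_finite_toFinset hSfin]
  rw [hNat, hcount]
  exact dvd_mul_left k _
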